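/- Let n ≥ 1 and let F be an upset of a De Morgan lattice L. Then F is a Kalman prime n-filter on L if and only if there exist a homomorphism of De Morgan lattices h : L → (Fin n → Bool × Bool) and a function s : Fin n → Bool such that for every x ∈ L and i : Fin n, if s i = true then (h x i).2 = true implies (h x i).1 = true, and if s i = false then (h x i).1 = true implies (h x i).2 = true, and F = {x : ∃ i, (h x i).1 = true}. (Kalman prime n-filters are precisely the homomorphic preimages of the designated sets of the dual products P₁^{⊗i} ⊗ K₁^{⊗j} with i + j = n.) -/

import Mathlib

/-- A De Morgan lattice: a distributive lattice with an antitone involution. -/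
class DeMorgan (L : Type*) extends DistribLattice L where
  dneg : L → L
  dneg_dneg : ∀ x : L, dneg (dneg x) = x
  dneg_sup : ∀ x y : L, dneg (x ⊔ y) = dneg x ⊓ dneg y

prefix:max "∼" => DeMorgan.dneg

section Defs

variable {α : Type*}

/-- An upward closed subset of a lattice. -/
def IsUpset [Lattice α] (F : Set α) : Prop :=
  ∀ ⦃x y : α⦄, x ∈ F → x ≤ y → y ∈ F

/-- A lattice filter: an upset closed under binary meets. -/
def IsLatFilter [Lattice α] (F : Set α) : Prop :=
  IsUpset F ∧ ∀ x y : α, x ∈ F → y ∈ F → x ⊓ y ∈ F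

/-- An `n`-filter: an upset such that for every nonempty finite `Y`, if the meet of
every nonempty subset of `Y` of size at most `n` lies in `F`, then so does the meet of `Y`. -/
def IsNFilter [Lattice α] (n : ℕ) (F : Set α) : Prop :=
  IsUpset F ∧ ∀ (Y : Finset α) (hY : Y.Nonempty),
    (∀ (X : Finset α) (hX : X.Nonempty), X ⊆ Y → X.card ≤ n → X.inf' hX id ∈ F) →
    Y.inf' hY id ∈ F

/-- A prime upset: `x ⊔ y ∈ F` implies `x ∈ F` or `y ∈ F`. -/
def IsPrimeUpset [Lattice α] (F : Set α) : Prop :=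
  ∀ x y : α, x ⊔ y ∈ F → x ∈ F ∨ y ∈ F

/-- A downward closed subset of a lattice. -/
def IsDownset [Lattice α] (I : Set α) : Prop :=
  ∀ ⦃x y : α⦄, x ∈ I → y ≤ x → y ∈ I

/-- A lattice ideal: a downset closed under binary joins. -/
def IsIdeal [Lattice α] (I : Set α) : Prop :=
  IsDownset I ∧ ∀ x y : α, x ∈ I → y ∈ I → x ⊔ y ∈ I

/-- An `n`-ideal: the order dual notion of an `n`-filter. -/
def IsNIdeal [Lattice α] (n : ℕ) (I : Set α) : Prop :=
  IsDownset I ∧ ∀ (Y : Finset α) (hY : Y.Nonempty),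
    (∀ (X : Finset α) (hX : X.Nonempty), X ⊆ Y → X.card ≤ n → X.sup' hX id ∈ I) →
    Y.sup' hY id ∈ I

variable {L : Type*} [DeMorgan L]

/-- Almost complete upset: `x ∈ F` implies `x ⊓ (y ⊔ ∼y) ∈ F`. -/
def AlmostComplete (F : Set L) : Prop := ∀ x ∈ F, ∀ y : L, x ⊓ (y ⊔ ∼y) ∈ F

/-- Complete upset: almost complete and nonempty. -/
def IsCompleteUpset (F : Set L) : Prop := AlmostComplete F ∧ F.Nonempty

/-- Almost consistent upset: `(x ⊓ ∼x) ⊔ y ∈ F` implies `y ∈ F`. -/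
def AlmostConsistent (F : Set L) : Prop := ∀ x y : L, (x ⊓ ∼x) ⊔ y ∈ F → y ∈ F

/-- Consistent upset: almost consistent and not total. -/
def IsConsistentUpset (F : Set L) : Prop := AlmostConsistent F ∧ F ≠ Set.univ

/-- Classical upset: complete and consistent. -/
def IsClassicalUpset (F : Set L) : Prop := IsCompleteUpset F ∧ IsConsistentUpset F

/-- Kalman upset. -/
def IsKalmanUpset (F : Set L) : Prop :=
  ∀ x y z u : L, ((x ⊓ ∼x) ⊓ z) ⊔ u ∈ F → ((y ⊔ ∼y) ⊓ z) ⊔ u ∈ F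

/-- A homomorphism of De Morgan lattices. -/
def IsDMHom {L M : Type*} [DeMorgan L] [DeMorgan M] (h : L → M) : Prop :=
  (∀ x y : L, h (x ⊓ y) = h x ⊓ h y) ∧ (∀ x y : L, h (x ⊔ y) = h x ⊔ h y) ∧
    ∀ x : L, h (∼x) = ∼(h x)

/-- The filter generated by all elements of the form `x ⊔ ∼x`. -/
def Fcomp (L : Type*) [DeMorgan L] : Set L :=
  {a | ∃ (s : Finset L) (hs : s.Nonempty), s.inf' hs (fun x => x ⊔ ∼x) ≤ a}

/-- The `n`-filter generated by a set. -/
def nFilterGen (n : ℕ) (U : Set L) : Set L :=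
  ⋂₀ {F : Set L | IsNFilter n F ∧ U ⊆ F}

/-- `Comp U`. -/
def CompCl (U : Set L) : Set L := {x | ∃ a ∈ U, ∃ f ∈ Fcomp L, a ⊓ f ≤ x}

/-- `Cons U`. -/
def ConsCl (U : Set L) : Set L := {x | ∃ f ∈ Fcomp L, ∼f ⊔ x ∈ U}

/-- A congruence of De Morgan lattices, as a binary relation. -/
def IsCongruence (θ : L → L → Prop) : Prop :=
  Equivalence θ ∧
  (∀ a b c d : L, θ a b → θ c d → θ (a ⊓ c) (b ⊓ d)) ∧
  (∀ a b c d : L, θ a b → θ c d → θ (a ⊔ c) (b ⊔ d)) ∧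
  ∀ a b : L, θ a b → θ (∼a) (∼b)

end Defs

/-- The four-element De Morgan lattice `DM₁` on `Bool × Bool`. -/
instance : DeMorgan (Bool × Bool) :=
  { (inferInstance : DistribLattice (Bool × Bool)) with
    dneg := fun p => (!p.2, !p.1)
    dneg_dneg := by decide
    dneg_sup := by decide }

/-- Powers of `DM₁`, with componentwise operations. -/
instance {ι : Type*} : DeMorgan (ι → Bool × Bool) :=
  { (inferInstance : DistribLattice (ι → Bool × Bool)) with
    dneg := fun f i => ∼(f i)
    dneg_dneg := fun f => funext fun i => DeMorgan.dneg_dneg (f i)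
    dneg_sup := fun f g => funext fun i => DeMorgan.dneg_sup (f i) (g i) }

section Aux12
open Classical in
/-- Prop to Bool. -/
noncomputable def chi12 (p : Prop) : Bool := decide p

lemma chi12_iff (p : Prop) : chi12 p = true ↔ p := by
  simp [chi12]

lemma chi12_and (p q : Prop) : chi12 (p ∧ q) = (chi12 p && chi12 q) := by
  by_cases hp : p <;> by_cases hq : q <;> simp [chi12, hp, hq]

lemma chi12_or (p q : Prop) : chi12 (p ∨ q) = (chi12 p || chi12 q) := by
  by_cases hp : p <;> by_cases hq : q <;> simp [chi12, hp, hq]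

lemma chi12_not (p : Prop) : chi12 (¬ p) = !(chi12 p) := by
  by_cases hp : p <;> simp [chi12, hp]

lemma bool_inf_eq : ∀ a b : Bool, a ⊓ b = (a && b) := by decide
lemma bool_sup_eq : ∀ a b : Bool, a ⊔ b = (a || b) := by decide
lemma bb_inf_eq : ∀ p q : Bool × Bool, p ⊓ q = (p.1 && q.1, p.2 && q.2) := by decide
lemma bb_sup_eq : ∀ p q : Bool × Bool, p ⊔ q = (p.1 || q.1, p.2 || q.2) := by decide
lemma bb_dneg_eq : ∀ p : Bool × Bool, ∼p = (!p.2, !p.1) := by decide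
lemma bb_fst_mono : ∀ p q : Bool × Bool, p ≤ q → p.1 = true → q.1 = true := by decide

lemma bb_kalman_key : ∀ (t : Bool) (a b : Bool × Bool),
    ((t = true → (a.2 = true → a.1 = true)) ∧ (t = false → (a.1 = true → a.2 = true))) →
    ((t = true → (b.2 = true → b.1 = true)) ∧ (t = false → (b.1 = true → b.2 = true))) →
    (a ⊓ ∼a) ≤ (b ⊔ ∼b) := by decide

variable {L : Type*} [DeMorgan L]

lemma dneg_inf (x y : L) : ∼(x ⊓ y) = ∼x ⊔ ∼y := by
  have h : x ⊓ y = ∼(∼x ⊔ ∼y) := by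
    rw [DeMorgan.dneg_sup, DeMorgan.dneg_dneg, DeMorgan.dneg_dneg]
  rw [h, DeMorgan.dneg_dneg]

end Aux12
section Aux12b
variable {α : Type*} [DistribLattice α]

/-- A (possibly empty or total) prime filter, as an unbundled predicate. -/
def PrimeF12 (G : Set α) : Prop :=
  IsUpset G ∧ (∀ x y : α, x ∈ G → y ∈ G → x ⊓ y ∈ G) ∧
    ∀ x y : α, x ⊔ y ∈ G → x ∈ G ∨ y ∈ G

lemma mem_inf'_of_filter {G : Set α} (hup : IsUpset G)
    (hm : ∀ x y : α, x ∈ G → y ∈ G → x ⊓ y ∈ G) {β : Type*} (s : Finset β)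
    (hs : s.Nonempty) (f : β → α) (h : ∀ b ∈ s, f b ∈ G) : s.inf' hs f ∈ G := by
  induction s using Finset.cons_induction with
  | empty => exact absurd hs (by simp)
  | cons b t hb ih =>
    rcases t.eq_empty_or_nonempty with rfl | ht
    · simpa using h b (by simp)
    · rw [Finset.inf'_cons ht]
      exact hm _ _ (h b (by simp)) (ih ht fun c hc => h c (by simp [hc]))

lemma not_mem_sup'_of_prime {G : Set α} (hpr : ∀ x y : α, x ⊔ y ∈ G → x ∈ G ∨ y ∈ G)
    {β : Type*} (s : Finset β) (hs : s.Nonempty) (f : β → α)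
    (h : ∀ b ∈ s, f b ∉ G) : s.sup' hs f ∉ G := by
  induction s using Finset.cons_induction with
  | empty => exact absurd hs (by simp)
  | cons b t hb ih =>
    rcases t.eq_empty_or_nonempty with rfl | ht
    · simpa using h b (by simp)
    · rw [Finset.sup'_cons ht]
      intro hmem
      rcases hpr _ _ hmem with h1 | h2
      · exact h b (by simp) h1
      · exact ih ht (fun c hc => h c (by simp [hc])) h2

lemma inf_sup'_distrib {β : Type*} (a : α) (s : Finset β) (hs : s.Nonempty) (f : β → α) :
    a ⊓ s.sup' hs f = s.sup' hs (fun b => a ⊓ f b) := by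
  induction s using Finset.cons_induction with
  | empty => exact absurd hs (by simp)
  | cons b t hb ih =>
    rcases t.eq_empty_or_nonempty with rfl | ht
    · simp
    · rw [Finset.sup'_cons ht, Finset.sup'_cons ht, inf_sup_left, ih ht]

/-- Prime filter theorem: a filter disjoint from an ideal extends to a prime filter
disjoint from it. -/
lemma pit12 {H I : Set α} (hHup : IsUpset H)
    (hHm : ∀ x y : α, x ∈ H → y ∈ H → x ⊓ y ∈ H) (hHne : H.Nonempty)
    (hIdown : IsDownset I) (hIjoin : ∀ x y : α, x ∈ I → y ∈ I → x ⊔ y ∈ I)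
    (hdisj : ∀ x ∈ H, x ∉ I) :
    ∃ G : Set α, PrimeF12 G ∧ H ⊆ G ∧ ∀ x ∈ G, x ∉ I := by
  set S : Set (Set α) := {G | (IsUpset G ∧ ∀ x y : α, x ∈ G → y ∈ G → x ⊓ y ∈ G)
      ∧ H ⊆ G ∧ ∀ x ∈ G, x ∉ I} with hS
  have hzorn := zorn_subset_nonempty S ?_ H ⟨⟨hHup, hHm⟩, le_refl _, hdisj⟩
  · obtain ⟨M, -, hMS, hMmax⟩ := hzorn
    obtain ⟨⟨hMup, hMm⟩, hMH, hMI⟩ := hMS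
    refine ⟨M, ⟨hMup, hMm, ?_⟩, hMH, hMI⟩
    intro a b hab
    by_contra hcon
    push_neg at hcon
    obtain ⟨ha, hb⟩ := hcon
    -- the filter generated by M and a meets I, similarly for b
    have hMne : M.Nonempty := hHne.mono hMH
    have key : ∀ c : α, c ∉ M → ∃ m ∈ M, ∃ i ∈ I, m ⊓ c ≤ i := by
      intro c hc
      by_contra hk
      push_neg at hk
      set G' : Set α := {z | ∃ m ∈ M, m ⊓ c ≤ z} with hG'
      have hG'S : G' ∈ S := by
        refine ⟨⟨?_, ?_⟩, ?_, ?_⟩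
        · rintro x y ⟨m, hm, hle⟩ hxy; exact ⟨m, hm, hle.trans hxy⟩
        · rintro x y ⟨m, hm, hle⟩ ⟨m', hm', hle'⟩
          exact ⟨m ⊓ m', hMm _ _ hm hm', by
            calc m ⊓ m' ⊓ c ≤ (m ⊓ c) ⊓ (m' ⊓ c) := by
                  simp only [le_inf_iff]
                  constructor
                  · exact ⟨inf_le_of_left_le inf_le_left, inf_le_right⟩
                  · exact ⟨inf_le_of_left_le inf_le_right, inf_le_right⟩
              _ ≤ x ⊓ y := inf_le_inf hle hle'⟩
        · intro x hx
          exact ⟨x, hMH hx, inf_le_left⟩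
        · rintro x ⟨m, hm, hle⟩ hxI
          exact hk m hm x hxI hle
      have hsub : G' ⊆ M := hMmax hG'S (fun x hx => ⟨x, hx, inf_le_left⟩)
      obtain ⟨m, hm⟩ := hMne
      exact hc (hsub ⟨m, hm, inf_le_right⟩)
    obtain ⟨ma, hma, ia, hia, hlea⟩ := key a ha
    obtain ⟨mb, hmb, ib, hib, hleb⟩ := key b hb
    have hmM : ma ⊓ mb ⊓ (a ⊔ b) ∈ M := hMm _ _ (hMm _ _ hma hmb) hab
    have hle : ma ⊓ mb ⊓ (a ⊔ b) ≤ ia ⊔ ib := by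
      rw [inf_sup_left]
      refine sup_le_sup ?_ ?_
      · exact le_trans (inf_le_inf_right a (inf_le_left)) hlea
      · exact le_trans (inf_le_inf_right b (inf_le_right)) hleb
    exact hMI _ hmM (hIdown (hIjoin _ _ hia hib) hle)
  · intro c hcS hchain hcne
    refine ⟨⋃₀ c, ⟨⟨?_, ?_⟩, ?_, ?_⟩, fun s hs => Set.subset_sUnion_of_mem hs⟩
    · rintro x y ⟨G, hG, hx⟩ hxy
      exact ⟨G, hG, ((hcS hG).1.1 hx hxy)⟩
    · rintro x y ⟨G, hG, hx⟩ ⟨G', hG', hy⟩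
      rcases hchain.total hG hG' with h | h
      · exact ⟨G', hG', (hcS hG').1.2 _ _ (h hx) hy⟩
      · exact ⟨G, hG, (hcS hG).1.2 _ _ hx (h hy)⟩
    · obtain ⟨G, hG⟩ := hcne
      exact (hcS hG).2.1.trans (Set.subset_sUnion_of_mem hG)
    · rintro x ⟨G, hG, hx⟩
      exact (hcS hG).2.2 x hx

variable {F : Set α}

/-- Maximal prime filter contained in `F`. -/
def MaxPF12 (F G : Set α) : Prop :=
  PrimeF12 G ∧ G ⊆ F ∧ ∀ G' : Set α, PrimeF12 G' → G' ⊆ F → G ⊆ G' → G' = G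

lemma exists_prime_in (hFup : IsUpset F) (hFpr : IsPrimeUpset F) {x : α} (hx : x ∈ F) :
    ∃ G : Set α, PrimeF12 G ∧ x ∈ G ∧ G ⊆ F := by
  obtain ⟨G, hG, hsub, hdisj⟩ := pit12 (H := Set.Ici x) (I := Fᶜ)
    (fun a b ha hab => le_trans ha hab)
    (fun a b ha hb => le_inf ha hb) ⟨x, le_refl x⟩
    (fun a b ha hab hbF => ha (hFup hbF hab))
    (fun a b ha hb hab => (hFpr a b hab).elim ha hb)
    (fun a ha haF => haF (hFup hx ha))
  exact ⟨G, hG, hsub (le_refl x), fun a ha => not_not.mp (hdisj a ha)⟩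

lemma exists_maxpf {G₀ : Set α} (hG₀ : PrimeF12 G₀) (hsub : G₀ ⊆ F) :
    ∃ G : Set α, MaxPF12 F G ∧ G₀ ⊆ G := by
  set S : Set (Set α) := {G | PrimeF12 G ∧ G ⊆ F} with hS
  have hzorn := zorn_subset_nonempty S ?_ G₀ ⟨hG₀, hsub⟩
  · obtain ⟨M, hsub', hMS, hMmax⟩ := hzorn
    exact ⟨M, ⟨hMS.1, hMS.2, fun G' hG' hG'F hMG' => le_antisymm (hMmax ⟨hG', hG'F⟩ hMG') hMG'⟩, hsub'⟩
  · intro c hcS hchain hcne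
    refine ⟨⋃₀ c, ⟨⟨?_, ?_, ?_⟩, ?_⟩, fun s hs => Set.subset_sUnion_of_mem hs⟩
    · rintro x y ⟨G, hG, hx⟩ hxy
      exact ⟨G, hG, (hcS hG).1.1 hx hxy⟩
    · rintro x y ⟨G, hG, hx⟩ ⟨G', hG', hy⟩
      rcases hchain.total hG hG' with h | h
      · exact ⟨G', hG', (hcS hG').1.2.1 _ _ (h hx) hy⟩
      · exact ⟨G, hG, (hcS hG).1.2.1 _ _ hx (h hy)⟩
    · rintro x y ⟨G, hG, hxy⟩
      rcases (hcS hG).1.2.2 x y hxy with h | h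
      · exact Or.inl ⟨G, hG, h⟩
      · exact Or.inr ⟨G, hG, h⟩
    · rintro x ⟨G, hG, hx⟩
      exact (hcS hG).2 hx

lemma maxpf_nonempty (hFup : IsUpset F) (hFpr : IsPrimeUpset F) (hFne : F.Nonempty)
    {G : Set α} (hG : MaxPF12 F G) : G.Nonempty := by
  obtain ⟨b, hb⟩ := hFne
  obtain ⟨G', hG', hbG', hG'F⟩ := exists_prime_in hFup hFpr hb
  by_contra hGe
  rw [Set.not_nonempty_iff_eq_empty] at hGe
  have := hG.2.2 G' hG' hG'F (by rw [hGe]; exact Set.empty_subset _)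
  rw [this] at hbG'
  rw [hGe] at hbG'
  exact hbG'

lemma maxpf_dense (hFup : IsUpset F) (hFpr : IsPrimeUpset F) (hFne : F.Nonempty)
    {G : Set α} (hG : MaxPF12 F G) {x : α} (hx : x ∉ G) : ∃ y ∈ G, x ⊓ y ∉ F := by
  by_contra hcon
  push_neg at hcon
  obtain ⟨⟨hGup, hGm, hGpr⟩, hGF, hGmax⟩ := hG
  set H : Set α := {z | ∃ y ∈ G, x ⊓ y ≤ z} with hH
  obtain ⟨g, hg⟩ := maxpf_nonempty hFup hFpr hFne ⟨⟨hGup, hGm, hGpr⟩, hGF, hGmax⟩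
  obtain ⟨Q, hQ, hHQ, hQdisj⟩ := pit12 (H := H) (I := Fᶜ)
    (fun a b ⟨y, hy, hle⟩ hab => ⟨y, hy, hle.trans hab⟩)
    (by
      rintro a b ⟨y, hy, hle⟩ ⟨y', hy', hle'⟩
      refine ⟨y ⊓ y', hGm _ _ hy hy', ?_⟩
      calc x ⊓ (y ⊓ y') ≤ (x ⊓ y) ⊓ (x ⊓ y') := by
            simp only [le_inf_iff]
            exact ⟨⟨inf_le_left, inf_le_of_right_le inf_le_left⟩,
              ⟨inf_le_left, inf_le_of_right_le inf_le_right⟩⟩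
        _ ≤ a ⊓ b := inf_le_inf hle hle')
    ⟨x ⊓ g, g, hg, le_refl _⟩
    (fun a b ha hab hbF => ha (hFup hbF hab))
    (fun a b ha hb hab => (hFpr a b hab).elim ha hb)
    (by rintro a ⟨y, hy, hle⟩ haF; exact haF (hFup (hcon y hy) hle))
  have hGQ : G ⊆ Q := fun y hy => hHQ ⟨y, hy, inf_le_right⟩
  have hQF : Q ⊆ F := fun a ha => not_not.mp (hQdisj a ha)
  have : Q = G := hGmax Q hQ hQF hGQ
  exact hx (this ▸ hHQ ⟨g, hg, inf_le_left⟩)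

end Aux12b
section Aux12c

lemma inf'_congr12 {β γ : Type*} [SemilatticeInf γ] {A B : Finset β} (f : β → γ)
    (hA : A.Nonempty) (hB : B.Nonempty) (h : A = B) : A.inf' hA f = B.inf' hB f := by
  subst h; rfl

variable {α : Type*} [DistribLattice α] {F : Set α} {n : ℕ}

lemma erase_nonempty12 (hn : 1 ≤ n) (k : Fin (n+1)) :
    ((Finset.univ : Finset (Fin (n+1))).erase k).Nonempty := by
  rw [← Finset.card_pos, Finset.card_erase_of_mem (Finset.mem_univ k)]
  simp only [Finset.card_univ, Fintype.card_fin]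
  omega

lemma nfilter_cover (hn : 1 ≤ n) (hN : IsNFilter n F) (c : Fin (n+1) → α)
    (h : ∀ k : Fin (n+1), (Finset.univ.erase k).inf' (erase_nonempty12 hn k) c ∈ F) :
    Finset.univ.inf' ⟨0, Finset.mem_univ 0⟩ c ∈ F := by
  classical
  have hune : (Finset.univ : Finset (Fin (n+1))).Nonempty := ⟨0, Finset.mem_univ 0⟩
  set Y : Finset α := Finset.univ.image c with hYdef
  have hYne : Y.Nonempty := hune.image c
  have hYinf : Y.inf' hYne id = Finset.univ.inf' hune c :=
    Finset.inf'_image (hune.image c) id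
  have hEk : ∀ k : Fin (n+1),
      (((Finset.univ.erase k).image c).inf' ((erase_nonempty12 hn k).image c) id) ∈ F := by
    intro k
    have heq : (((Finset.univ.erase k).image c).inf' ((erase_nonempty12 hn k).image c) id)
        = (Finset.univ.erase k).inf' (erase_nonempty12 hn k) c :=
      Finset.inf'_image ((erase_nonempty12 hn k).image c) id
    rw [heq]
    exact h k
  have hmain : ∀ (X : Finset α) (hX : X.Nonempty), X ⊆ Y → X.card ≤ n → X.inf' hX id ∈ F := by
    intro X hX hXY hXcard
    by_cases hall : ∀ k, c k ∈ X
    · have hYX : Y ⊆ X := by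
        intro a ha
        obtain ⟨i, -, rfl⟩ := Finset.mem_image.mp ha
        exact hall i
      have hXeq : X = Y := Finset.Subset.antisymm hXY hYX
      obtain ⟨k, -, l, -, hkl, hckl⟩ := Finset.exists_ne_map_eq_of_card_lt_of_maps_to
        (t := X) (s := (Finset.univ : Finset (Fin (n+1))))
        (by rw [Finset.card_univ, Fintype.card_fin]; omega) (fun i _ => hall i)
      have hYer : Y = (Finset.univ.erase k).image c := by
        apply Finset.Subset.antisymm
        · intro a ha
          obtain ⟨i, -, rfl⟩ := Finset.mem_image.mp ha
          by_cases hik : i = k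
          · subst hik
            exact Finset.mem_image.mpr
              ⟨l, Finset.mem_erase.mpr ⟨Ne.symm hkl, Finset.mem_univ l⟩, hckl.symm⟩
          · exact Finset.mem_image.mpr ⟨i, Finset.mem_erase.mpr ⟨hik, Finset.mem_univ i⟩, rfl⟩
        · intro a ha
          obtain ⟨i, -, rfl⟩ := Finset.mem_image.mp ha
          exact Finset.mem_image_of_mem c (Finset.mem_univ i)
      rw [inf'_congr12 id hX ((erase_nonempty12 hn k).image c) (hXeq.trans hYer)]
      exact hEk k
    · push_neg at hall
      obtain ⟨k, hk⟩ := hall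
      have hsub : X ⊆ (Finset.univ.erase k).image c := by
        intro a ha
        obtain ⟨i, -, rfl⟩ := Finset.mem_image.mp (hXY ha)
        by_cases hik : i = k
        · exact absurd (hik ▸ ha) hk
        · exact Finset.mem_image.mpr ⟨i, Finset.mem_erase.mpr ⟨hik, Finset.mem_univ i⟩, rfl⟩
      exact hN.1 (hEk k) (Finset.inf'_mono id hsub hX)
  have := hN.2 Y hYne hmain
  rwa [hYinf] at this

lemma no_succ_maxpf (hn : 1 ≤ n) (hFup : IsUpset F) (hFpr : IsPrimeUpset F)
    (hN : IsNFilter n F) (hFne : F.Nonempty) (c : Fin (n+1) → Set α)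
    (hinj : Function.Injective c) (hc : ∀ i, MaxPF12 F (c i)) : False := by
  classical
  obtain ⟨x₀, hx₀⟩ := hFne
  have hune : (Finset.univ : Finset (Fin (n+1))).Nonempty := ⟨0, Finset.mem_univ 0⟩
  -- separating elements
  have hsep : ∀ i j : Fin (n+1), i ≠ j → ∃ a, a ∈ c i ∧ a ∉ c j := by
    intro i j hij
    by_contra hcon
    push_neg at hcon
    have hsub : c i ⊆ c j := fun a ha => hcon a ha
    exact hij (hinj ((hc i).2.2 (c j) (hc j).1 (hc j).2.1 hsub)).symm
  set t : Fin (n+1) → Fin (n+1) → α := fun i j =>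
    if h : i ≠ j then (hsep i j h).choose else x₀ with ht
  have ht1 : ∀ i j (h : i ≠ j), t i j ∈ c i := by
    intro i j h; simp only [ht, dif_pos h]; exact (hsep i j h).choose_spec.1
  have ht2 : ∀ i j (h : i ≠ j), t i j ∉ c j := by
    intro i j h; simp only [ht, dif_pos h]; exact (hsep i j h).choose_spec.2
  set v : Fin (n+1) → α := fun i => (Finset.univ.erase i).inf' (erase_nonempty12 hn i) (t i)
    with hv
  have hv1 : ∀ i, v i ∈ c i := by
    intro i
    exact mem_inf'_of_filter (hc i).1.1 (hc i).1.2.1 _ _ _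
      (fun j hj => ht1 i j (Ne.symm (Finset.mem_erase.mp hj).1))
  have hv2 : ∀ i j, i ≠ j → v i ∉ c j := by
    intro i j hij hmem
    exact ht2 i j hij ((hc j).1.1 hmem
      (Finset.inf'_le (t i) (Finset.mem_erase.mpr ⟨Ne.symm hij, Finset.mem_univ j⟩)))
  set w : Fin (n+1) → α := fun i => (Finset.univ.erase i).sup' (erase_nonempty12 hn i) v
    with hw
  have hw1 : ∀ i j, i ≠ j → w i ∈ c j := by
    intro i j hij
    exact (hc j).1.1 (hv1 j)
      (Finset.le_sup' v (Finset.mem_erase.mpr ⟨Ne.symm hij, Finset.mem_univ j⟩))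
  have hw2 : ∀ i, w i ∉ c i := by
    intro i
    exact not_mem_sup'_of_prime (hc i).1.2.2 _ _ v
      (fun j hj => hv2 j i (Finset.mem_erase.mp hj).1)
  set m : α := Finset.univ.inf' hune w with hm
  have hmnot : ∀ i, m ∉ c i := by
    intro i hmem
    exact hw2 i ((hc i).1.1 hmem (Finset.inf'_le w (Finset.mem_univ i)))
  have hy : ∀ i : Fin (n+1), ∃ y ∈ c i, m ⊓ y ∉ F := fun i =>
    maxpf_dense hFup hFpr ⟨x₀, hx₀⟩ (hc i) (hmnot i)
  set y : Fin (n+1) → α := fun i => (hy i).choose with hydef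
  have hy1 : ∀ i, y i ∈ c i := fun i => (hy i).choose_spec.1
  have hy2 : ∀ i, m ⊓ y i ∉ F := fun i => (hy i).choose_spec.2
  set Y : α := Finset.univ.sup' hune y with hYdef
  have hY1 : ∀ i, Y ∈ c i := fun i =>
    (hc i).1.1 (hy1 i) (Finset.le_sup' y (Finset.mem_univ i))
  have hY2 : m ⊓ Y ∉ F := by
    rw [hYdef, inf_sup'_distrib]
    exact not_mem_sup'_of_prime hFpr _ _ _ (fun i _ => hy2 i)
  -- the contradicting family
  set c' : Fin (n+1) → α := fun i => if i = Fin.last n then w i ⊓ Y else w i with hc'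
  have hc'le : ∀ i, c' i ≤ w i := by
    intro i; simp only [hc']; split <;> simp
  have herase : ∀ k, (Finset.univ.erase k).inf' (erase_nonempty12 hn k) c' ∈ F := by
    intro k
    refine (hc k).2.1 (mem_inf'_of_filter (hc k).1.1 (hc k).1.2.1 _ _ _ ?_)
    intro j hj
    have hjk : j ≠ k := (Finset.mem_erase.mp hj).1
    simp only [hc']
    split
    · exact (hc k).1.2.1 _ _ (hw1 j k hjk) (hY1 k)
    · exact hw1 j k hjk
  have htot : Finset.univ.inf' ⟨0, Finset.mem_univ 0⟩ c' = m ⊓ Y := by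
    apply le_antisymm
    · apply le_inf
      · rw [hm]
        apply Finset.le_inf'
        intro i _
        exact le_trans (Finset.inf'_le c' (Finset.mem_univ i)) (hc'le i)
      · refine le_trans (Finset.inf'_le c' (Finset.mem_univ (Fin.last n))) ?_
        simp only [hc', if_pos rfl]
        exact inf_le_right
    · apply Finset.le_inf'
      intro i _
      simp only [hc']
      split
      · exact inf_le_inf (by rw [hm]; exact Finset.inf'_le w (Finset.mem_univ i)) le_rfl
      · exact le_trans inf_le_left (by rw [hm]; exact Finset.inf'_le w (Finset.mem_univ i))
  have := nfilter_cover hn hN c' herase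
  rw [htot] at this
  exact hY2 this

end Aux12c
section Aux12d

lemma hom_inf'12 {L M : Type*} [Lattice L] [Lattice M] {h : L → M}
    (hmeet : ∀ x y : L, h (x ⊓ y) = h x ⊓ h y) (Y : Finset L) (hY : Y.Nonempty) :
    h (Y.inf' hY id) = Y.inf' hY h := by
  induction Y using Finset.cons_induction with
  | empty => exact absurd hY (by simp)
  | cons b t hb ih =>
    rcases t.eq_empty_or_nonempty with rfl | ht
    · simp
    · rw [Finset.inf'_cons ht, Finset.inf'_cons ht, id_eq, hmeet, ih ht]

lemma fst_inf'12 {β : Type*} (s : Finset β) (hs : s.Nonempty) (f : β → Bool × Bool) :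
    (s.inf' hs f).1 = s.inf' hs fun b => (f b).1 := by
  induction s using Finset.cons_induction with
  | empty => exact absurd hs (by simp)
  | cons b t hb ih =>
    rcases t.eq_empty_or_nonempty with rfl | ht
    · simp
    · rw [Finset.inf'_cons ht, Finset.inf'_cons ht, ← ih ht]
      simp [bb_inf_eq, bool_inf_eq]

lemma bool_inf'_eq_true {β : Type*} (s : Finset β) (hs : s.Nonempty) (g : β → Bool) :
    s.inf' hs g = true ↔ ∀ b ∈ s, g b = true := by
  induction s using Finset.cons_induction with
  | empty => exact absurd hs (by simp)
  | cons b t hb ih =>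
    rcases t.eq_empty_or_nonempty with rfl | ht
    · simp
    · rw [Finset.inf'_cons ht, bool_inf_eq, Bool.and_eq_true, ih ht]
      simp

variable {L : Type*} [DeMorgan L] {F : Set L}

lemma maxpf_good (hFup : IsUpset F) (hFpr : IsPrimeUpset F) (hFne : F.Nonempty)
    (hK : IsKalmanUpset F) {G : Set L} (hG : MaxPF12 F G) :
    (∀ z : L, z ∈ G ∨ ∼z ∈ G) ∨ (∀ z : L, z ∈ G → ∼z ∉ G) := by
  by_contra hcon
  push_neg at hcon
  obtain ⟨⟨a, ha, hna⟩, b, hb, hnb⟩ := hcon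
  have hd : a ⊔ ∼a ∉ G := fun hmem => ((hG.1.2.2 _ _ hmem).elim ha hna)
  obtain ⟨y, hy, hyF⟩ := maxpf_dense hFup hFpr hFne hG hd
  have hhyp : ((b ⊓ ∼b) ⊓ y) ⊔ ((a ⊔ ∼a) ⊓ y) ∈ F :=
    hFup (hG.2.1 (hG.1.2.1 _ _ (hG.1.2.1 _ _ hb hnb) hy)) le_sup_left
  have hcc := hK b a y ((a ⊔ ∼a) ⊓ y) hhyp
  rw [sup_idem] at hcc
  exact hyF hcc

lemma chi12_congr {p q : Prop} (h : p ↔ q) : chi12 p = chi12 q := by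
  by_cases hp : p
  · rw [(chi12_iff p).mpr hp, ((chi12_iff q).mpr (h.mp hp)).symm]
  · have hq : ¬ q := fun hq => hp (h.mpr hq)
    have e1 : chi12 p = false := by
      cases hcp : chi12 p
      · rfl
      · exact absurd ((chi12_iff p).mp hcp) hp
    have e2 : chi12 q = false := by
      cases hcq : chi12 q
      · rfl
      · exact absurd ((chi12_iff q).mp hcq) hq
    rw [e1, e2]

/-- Build the homomorphism from a family of complete-or-consistent prime filters. -/
lemma build_hom (n : ℕ) (g : Fin n → Set L) (hg : ∀ i, PrimeF12 (g i))
    (hgood : ∀ i, (∀ z : L, z ∈ g i ∨ ∼z ∈ g i) ∨ (∀ z : L, z ∈ g i → ∼z ∉ g i))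
    (hFeq : ∀ x : L, x ∈ F ↔ ∃ i, x ∈ g i) :
    ∃ (h : L → (Fin n → Bool × Bool)) (s : Fin n → Bool), IsDMHom h ∧
      (∀ (x : L) (i : Fin n),
        (s i = true → ((h x i).2 = true → (h x i).1 = true)) ∧
        (s i = false → ((h x i).1 = true → (h x i).2 = true))) ∧
      F = {x : L | ∃ i : Fin n, (h x i).1 = true} := by
  refine ⟨fun x i => (chi12 (x ∈ g i), chi12 (∼x ∉ g i)),
    fun i => chi12 (∀ z : L, z ∈ g i ∨ ∼z ∈ g i), ⟨?_, ?_, ?_⟩, ?_, ?_⟩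
  · -- meets
    intro x y
    funext i
    rw [Pi.inf_apply, bb_inf_eq]
    refine Prod.ext ?_ ?_
    · show chi12 (x ⊓ y ∈ g i) = _
      rw [chi12_congr (show x ⊓ y ∈ g i ↔ (x ∈ g i ∧ y ∈ g i) from
        ⟨fun hm => ⟨(hg i).1 hm inf_le_left, (hg i).1 hm inf_le_right⟩,
         fun ⟨hx, hy⟩ => (hg i).2.1 _ _ hx hy⟩), chi12_and]
    · show chi12 (∼(x ⊓ y) ∉ g i) = _
      rw [chi12_congr (show ∼(x ⊓ y) ∉ g i ↔ (∼x ∉ g i ∧ ∼y ∉ g i) from by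
        rw [dneg_inf]
        constructor
        · intro hm
          exact ⟨fun hx => hm ((hg i).1 hx le_sup_left),
                 fun hy => hm ((hg i).1 hy le_sup_right)⟩
        · rintro ⟨hx, hy⟩ hm
          exact ((hg i).2.2 _ _ hm).elim hx hy), chi12_and]
  · -- joins
    intro x y
    funext i
    rw [Pi.sup_apply, bb_sup_eq]
    refine Prod.ext ?_ ?_
    · show chi12 (x ⊔ y ∈ g i) = _
      rw [chi12_congr (show x ⊔ y ∈ g i ↔ (x ∈ g i ∨ y ∈ g i) from
        ⟨fun hm => (hg i).2.2 _ _ hm,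
         fun hm => hm.elim (fun hx => (hg i).1 hx le_sup_left)
           (fun hy => (hg i).1 hy le_sup_right)⟩), chi12_or]
    · show chi12 (∼(x ⊔ y) ∉ g i) = _
      rw [chi12_congr (show ∼(x ⊔ y) ∉ g i ↔ (∼x ∉ g i ∨ ∼y ∉ g i) from by
        rw [DeMorgan.dneg_sup]
        constructor
        · intro hm
          by_contra hc
          push_neg at hc
          exact hm ((hg i).2.1 _ _ hc.1 hc.2)
        · rintro (hx | hy) hm
          · exact hx ((hg i).1 hm inf_le_left)
          · exact hy ((hg i).1 hm inf_le_right)), chi12_or]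
  · -- negation
    intro x
    funext i
    show _ = ∼((fun x (i : Fin n) => (chi12 (x ∈ g i), chi12 (∼x ∉ g i))) x i)
    rw [bb_dneg_eq]
    refine Prod.ext ?_ ?_
    · show chi12 (∼x ∈ g i) = !(chi12 (∼x ∉ g i))
      rw [← chi12_not]
      exact chi12_congr not_not.symm
    · show chi12 (∼∼x ∉ g i) = !(chi12 (x ∈ g i))
      rw [← chi12_not]
      exact chi12_congr (by rw [DeMorgan.dneg_dneg])
  · -- the s-condition
    intro x i
    constructor
    · intro hs h2
      have hcompl := (chi12_iff _).mp hs
      have h2' : ∼x ∉ g i := (chi12_iff _).mp h2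
      exact (chi12_iff _).mpr ((hcompl x).resolve_right h2')
    · intro hs h1
      have hncompl : ¬ (∀ z : L, z ∈ g i ∨ ∼z ∈ g i) := by
        intro hc
        have heq : chi12 (∀ z : L, z ∈ g i ∨ ∼z ∈ g i) = true := (chi12_iff _).mpr hc
        simp only [heq] at hs
        exact Bool.noConfusion hs
      have hcons := (hgood i).resolve_left hncompl
      exact (chi12_iff _).mpr (hcons x ((chi12_iff _).mp h1))
  · -- the set equality
    ext x
    rw [hFeq x]
    simp only [Set.mem_setOf_eq]
    constructor
    · rintro ⟨i, hi⟩; exact ⟨i, (chi12_iff _).mpr hi⟩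
    · rintro ⟨i, hi⟩; exact ⟨i, (chi12_iff _).mp hi⟩

end Aux12d
section Aux12e
variable {L : Type*} [DeMorgan L] {F : Set L} {n : ℕ}

lemma exists_family12 (hn : 1 ≤ n) (hFup : IsUpset F) (hFpr : IsPrimeUpset F)
    (hN : IsNFilter n F) (hFne : F.Nonempty) :
    ∃ g : Fin n → Set L, (∀ i, MaxPF12 F (g i)) ∧ ∀ x ∈ F, ∃ i, x ∈ g i := by
  classical
  set M : Set (Set L) := {G | MaxPF12 F G} with hM
  have hcover : ∀ x ∈ F, ∃ G ∈ M, x ∈ G := by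
    intro x hx
    obtain ⟨G₀, hG₀, hxG₀, hG₀F⟩ := exists_prime_in hFup hFpr hx
    obtain ⟨G, hGmax, hsub⟩ := exists_maxpf hG₀ hG₀F
    exact ⟨G, hGmax, hsub hxG₀⟩
  have hnosucc : ∀ t : Finset (Set L), ↑t ⊆ M → t.card ≠ n + 1 := by
    intro t hsub hcard
    set c : Fin (n+1) → Set L := fun i => (t.equivFin.symm (Fin.cast hcard.symm i) : Set L)
      with hc
    have hinj : Function.Injective c := by
      intro i j hij
      have := t.equivFin.symm.injective (Subtype.ext hij)
      have h2 := congrArg Fin.val this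
      exact Fin.ext h2
    exact no_succ_maxpf hn hFup hFpr hN hFne c hinj
      (fun i => hsub (t.equivFin.symm (Fin.cast hcard.symm i)).2)
  have hMfin : M.Finite := by
    by_contra hinf
    obtain ⟨t, htsub, htcard⟩ := (Set.Infinite.exists_subset_card_eq hinf (n+1))
    exact hnosucc t htsub htcard
  set T := hMfin.toFinset with hT
  have hTM : ∀ G, G ∈ T ↔ G ∈ M := fun G => Set.Finite.mem_toFinset hMfin
  have hTcard : T.card ≤ n := by
    by_contra hgt
    push_neg at hgt
    obtain ⟨t, htsub, htcard⟩ := Finset.exists_subset_card_eq hgt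
    exact hnosucc t (fun G hG => (hTM G).mp (htsub hG)) htcard
  obtain ⟨x₀, hx₀⟩ := hFne
  obtain ⟨G₀, hG₀M, -⟩ := hcover x₀ hx₀
  set l := T.toList with hldef
  have hl : l.length = T.card := Finset.length_toList T
  have hlpos : 0 < l.length := by
    rw [hl]
    exact Finset.card_pos.mpr ⟨G₀, (hTM G₀).mpr hG₀M⟩
  have hmemM : ∀ k : Fin l.length, l.get k ∈ M :=
    fun k => (hTM _).mp (Finset.mem_toList.mp (l.get_mem k))
  refine ⟨fun i => if h : (i : ℕ) < l.length then l.get ⟨i, h⟩ else l.get ⟨0, hlpos⟩, ?_, ?_⟩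
  · intro i
    dsimp only
    split
    · exact hmemM _
    · exact hmemM _
  · intro x hx
    obtain ⟨G, hGM, hxG⟩ := hcover x hx
    have hGl : G ∈ l := Finset.mem_toList.mpr ((hTM G).mpr hGM)
    obtain ⟨k, hk⟩ := List.mem_iff_get.mp hGl
    have hkn : (k : ℕ) < n := lt_of_lt_of_le (hl ▸ k.isLt) hTcard
    refine ⟨⟨k, hkn⟩, ?_⟩
    dsimp only
    rw [dif_pos (show ((⟨(k : ℕ), hkn⟩ : Fin n) : ℕ) < l.length from k.isLt)]
    have : l.get ⟨(k : ℕ), k.isLt⟩ = G := by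
      rw [← hk]
    rw [this]
    exact hxG

end Aux12e
/-- Kalman prime `n`-filters are precisely the homomorphic preimages of the
designated sets of the dual products `P₁^{⊗i} ⊗ K₁^{⊗j}` with `i + j = n`. -/
theorem statement12 {L : Type*} [DeMorgan L] [Nonempty L] (n : ℕ) (hn : 1 ≤ n)
    (F : Set L) (hF : IsUpset F) :
    (IsKalmanUpset F ∧ IsPrimeUpset F ∧ IsNFilter n F) ↔
      ∃ (h : L → (Fin n → Bool × Bool)) (s : Fin n → Bool), IsDMHom h ∧
        (∀ (x : L) (i : Fin n),
          (s i = true → ((h x i).2 = true → (h x i).1 = true)) ∧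
          (s i = false → ((h x i).1 = true → (h x i).2 = true))) ∧
        F = {x : L | ∃ i : Fin n, (h x i).1 = true} := by
  constructor
  · rintro ⟨hK, hP, hN⟩
    rcases F.eq_empty_or_nonempty with rfl | hFne
    · refine build_hom n (fun _ => (∅ : Set L))
        (fun i => ⟨fun x y hx _ => absurd hx (Set.notMem_empty x),
          fun x y hx _ => absurd hx (Set.notMem_empty x),
          fun x y hx => absurd hx (Set.notMem_empty _)⟩)
        (fun i => Or.inr (fun z hz => absurd hz (Set.notMem_empty z)))
        (fun x => ⟨fun hx => absurd hx (Set.notMem_empty x),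
          fun ⟨i, hi⟩ => absurd hi (Set.notMem_empty x)⟩)
    · obtain ⟨g, hg, hcov⟩ := exists_family12 hn hF hP hN hFne
      refine build_hom n g (fun i => (hg i).1)
        (fun i => maxpf_good hF hP hFne hK (hg i)) ?_
      intro x
      exact ⟨hcov x, fun ⟨i, hi⟩ => (hg i).2.1 hi⟩
  · rintro ⟨h, s, ⟨hmeet, hsup, hneg⟩, hs, hFeq⟩
    have hmem_iff : ∀ x : L, x ∈ F ↔ ∃ i, (h x i).1 = true := by
      intro x
      rw [hFeq]
      exact Iff.rfl
    refine ⟨?_, ?_, hF, ?_⟩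
    · -- Kalman
      intro x y z u hmemF
      rw [hmem_iff] at hmemF ⊢
      obtain ⟨i, hi⟩ := hmemF
      refine ⟨i, ?_⟩
      have e1 : h (((x ⊓ ∼x) ⊓ z) ⊔ u) i = ((h x i ⊓ ∼(h x i)) ⊓ h z i) ⊔ h u i := by
        rw [hsup, hmeet, hmeet, hneg]
        rfl
      have e2 : h (((y ⊔ ∼y) ⊓ z) ⊔ u) i = ((h y i ⊔ ∼(h y i)) ⊓ h z i) ⊔ h u i := by
        rw [hsup, hmeet, hsup, hneg]
        rfl
      rw [e2]
      rw [e1] at hi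
      exact bb_fst_mono _ _
        (sup_le_sup_right
          (inf_le_inf_right _ (bb_kalman_key (s i) _ _ (hs x i) (hs y i))) _) hi
    · -- prime
      intro x y hxy
      rw [hmem_iff] at hxy
      obtain ⟨i, hi⟩ := hxy
      have e : h (x ⊔ y) i = h x i ⊔ h y i := by rw [hsup]; rfl
      rw [e, bb_sup_eq] at hi
      rcases (Bool.or_eq_true _ _) ▸ hi with h1 | h1
      · exact Or.inl ((hmem_iff x).mpr ⟨i, h1⟩)
      · exact Or.inr ((hmem_iff y).mpr ⟨i, h1⟩)
    · -- n-filter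
      intro Y hY hmain
      by_contra hnot
      rw [hmem_iff] at hnot
      push_neg at hnot
      have hkey : ∀ (X : Finset L) (hX : X.Nonempty) (i : Fin n),
          (h (X.inf' hX id) i).1 = X.inf' hX (fun a => (h a i).1) := by
        intro X hX i
        rw [hom_inf'12 hmeet X hX, Finset.inf'_apply, fst_inf'12]
      have hfalse : ∀ i : Fin n, ∃ a ∈ Y, (h a i).1 = false := by
        intro i
        have h1 : (h (Y.inf' hY id) i).1 ≠ true := hnot i
        rw [hkey Y hY i] at h1
        by_contra hc
        push_neg at hc
        refine h1 ((bool_inf'_eq_true Y hY _).mpr ?_)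
        intro b hb
        cases hcb : (h b i).1
        · exact absurd hcb (hc b hb)
        · rfl
      choose ya hya hfa using hfalse
      haveI : Nonempty (Fin n) := ⟨⟨0, hn⟩⟩
      classical
      set X : Finset L := Finset.univ.image ya with hX
      have hXne : X.Nonempty :=
        ⟨ya (Classical.arbitrary _), Finset.mem_image_of_mem _ (Finset.mem_univ _)⟩
      have hXY : X ⊆ Y := by
        intro a ha
        obtain ⟨i, -, rfl⟩ := Finset.mem_image.mp ha
        exact hya i
      have hXcard : X.card ≤ n :=
        le_trans Finset.card_image_le (by simp)
      have hXF := hmain X hXne hXY hXcard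
      rw [hmem_iff] at hXF
      obtain ⟨i₀, hi₀⟩ := hXF
      rw [hkey X hXne i₀] at hi₀
      have hall := (bool_inf'_eq_true X hXne _).mp hi₀
      have := hall (ya i₀) (Finset.mem_image_of_mem _ (Finset.mem_univ i₀))
      rw [hfa i₀] at this
      exact Bool.noConfusion this
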